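/- Extremality of a symmetric invariant measure whose bounded harmonic functions are trivial (Lemma 5.1): Let (X, 𝓑) be a measurable space, μ a probability measure on X, and κ a Markov kernel on X such that (i) μ is invariant under κ (μ.bind κ = μ); (ii) κ is μ-symmetric, i.e., ∫_X f(x) (∫_X g(y) κ(x,dy)) μ(dx) = ∫_X (∫_X f(y) κ(x,dy)) g(x) μ(dx) for all bounded measurable f, g : X → ℝ; and (iii) every bounded measurable h : X → ℝ with ∫_X h(y) κ(x,dy) = h(x) for μ-a.e. x is μ-a.e. constant. Then μ is extremal in the set of κ-invariant probability measures: if μ = α₁ μ₁ + α₂ μ₂ where 0 < α₁, α₂ < 1, α₁ + α₂ = 1, and μ₁, μ₂ are probability measures on X invariant under κ (μᵢ.bind κ = μᵢ), then μ₁ = μ₂ = μ. -/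

import Mathlib

open MeasureTheory ProbabilityTheory
open scoped ENNReal

section Aux

variable {X : Type*} [MeasurableSpace X]

private lemma integrable_of_bdd {ρ : Measure X} [IsFiniteMeasure ρ] {f : X → ℝ}
    (hf : Measurable f) {C : ℝ} (hC : ∀ x, |f x| ≤ C) : Integrable f ρ :=
  ⟨hf.aestronglyMeasurable, HasFiniteIntegral.of_bounded
    (ae_of_all _ fun x => by simpa [Real.norm_eq_abs] using hC x)⟩

private lemma kernel_int_meas (κ : Kernel X X) [IsMarkovKernel κ] {f : X → ℝ} (hf : Measurable f) :
    Measurable (fun x => ∫ y, f y ∂(κ x)) := by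
  have : StronglyMeasurable (Function.uncurry fun (_ : X) (y : X) => f y) :=
    (hf.comp measurable_snd).stronglyMeasurable
  exact (this.integral_kernel_prod_right (κ := κ)).measurable

private lemma kernel_int_bdd (κ : Kernel X X) [IsMarkovKernel κ] {f : X → ℝ}
    (hf : Measurable f) {C : ℝ} (hC : ∀ x, |f x| ≤ C) (x : X) :
    |∫ y, f y ∂(κ x)| ≤ C := by
  have := norm_integral_le_of_norm_le_const (μ := κ x) (f := f) (C := C)
    (ae_of_all _ fun y => by simpa [Real.norm_eq_abs] using hC y)
  simpa [Real.norm_eq_abs, measure_univ] using this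

/-- Bochner integral of a bounded measurable function against a bind. -/
private lemma integral_bind_bdd (m : Measure X) [IsProbabilityMeasure m]
    (κ : Kernel X X) [IsMarkovKernel κ] {f : X → ℝ} (hf : Measurable f) {C : ℝ}
    (hC : ∀ x, |f x| ≤ C) :
    ∫ y, f y ∂(m.bind (fun x => κ x)) = ∫ x, ∫ y, f y ∂(κ x) ∂m := by
  wlog h0C : 0 ≤ C generalizing C
  · exact this (C := max C 0) (fun x => (hC x).trans (le_max_left _ _)) (le_max_right _ _)
  have hbind : IsProbabilityMeasure (m.bind (fun x => κ x)) := by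
    constructor
    rw [Measure.bind_apply MeasurableSet.univ κ.measurable.aemeasurable]
    simp [measure_univ]
  set Fp : X → ℝ≥0∞ := fun x => ∫⁻ y, ENNReal.ofReal (f y) ∂(κ x) with hFp
  set Fn : X → ℝ≥0∞ := fun x => ∫⁻ y, ENNReal.ofReal (-f y) ∂(κ x) with hFn
  have hfp : Measurable fun y => ENNReal.ofReal (f y) := hf.ennreal_ofReal
  have hfn : Measurable fun y => ENNReal.ofReal (-f y) := hf.neg.ennreal_ofReal
  have hFpm : Measurable Fp := hfp.lintegral_kernel
  have hFnm : Measurable Fn := hfn.lintegral_kernel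
  have hbp : ∀ x, Fp x ≤ ENNReal.ofReal C := by
    intro x
    calc Fp x ≤ ∫⁻ _, ENNReal.ofReal C ∂(κ x) :=
          lintegral_mono fun y => ENNReal.ofReal_le_ofReal ((abs_le.mp (hC y)).2)
      _ = ENNReal.ofReal C := by simp [measure_univ]
  have hbn : ∀ x, Fn x ≤ ENNReal.ofReal C := by
    intro x
    calc Fn x ≤ ∫⁻ _, ENNReal.ofReal C ∂(κ x) :=
          lintegral_mono fun y => ENNReal.ofReal_le_ofReal
            (by have := (abs_le.mp (hC y)).1; linarith)
      _ = ENNReal.ofReal C := by simp [measure_univ]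
  have hlt : ∀ x, Fp x < ∞ := fun x => lt_of_le_of_lt (hbp x) ENNReal.ofReal_lt_top
  have hltn : ∀ x, Fn x < ∞ := fun x => lt_of_le_of_lt (hbn x) ENNReal.ofReal_lt_top
  have h1 : ∀ x, ∫ y, f y ∂(κ x) = (Fp x).toReal - (Fn x).toReal := fun x =>
    integral_eq_lintegral_pos_part_sub_lintegral_neg_part (integrable_of_bdd hf hC)
  have hintp : Integrable (fun x => (Fp x).toReal) m := by
    refine integrable_of_bdd hFpm.ennreal_toReal (C := C) fun x => ?_
    rw [abs_of_nonneg ENNReal.toReal_nonneg]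
    calc (Fp x).toReal ≤ (ENNReal.ofReal C).toReal :=
          ENNReal.toReal_mono ENNReal.ofReal_ne_top (hbp x)
      _ = C := ENNReal.toReal_ofReal h0C
      _ ≤ C := le_rfl
  have hintn : Integrable (fun x => (Fn x).toReal) m := by
    refine integrable_of_bdd hFnm.ennreal_toReal (C := C) fun x => ?_
    rw [abs_of_nonneg ENNReal.toReal_nonneg]
    calc (Fn x).toReal ≤ (ENNReal.ofReal C).toReal :=
          ENNReal.toReal_mono ENNReal.ofReal_ne_top (hbn x)
      _ = C := ENNReal.toReal_ofReal h0C
      _ ≤ C := le_rfl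
  have h2 : ∫ x, ∫ y, f y ∂(κ x) ∂m
      = (∫⁻ x, Fp x ∂m).toReal - (∫⁻ x, Fn x ∂m).toReal := by
    rw [show (fun x => ∫ y, f y ∂(κ x)) = fun x => (Fp x).toReal - (Fn x).toReal from
      funext h1]
    rw [integral_sub hintp hintn,
      integral_toReal hFpm.aemeasurable (ae_of_all _ hlt),
      integral_toReal hFnm.aemeasurable (ae_of_all _ hltn)]
  have h3 : ∫ y, f y ∂(m.bind (fun x => κ x))
      = (∫⁻ y, ENNReal.ofReal (f y) ∂(m.bind (fun x => κ x))).toReal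
        - (∫⁻ y, ENNReal.ofReal (-f y) ∂(m.bind (fun x => κ x))).toReal :=
    integral_eq_lintegral_pos_part_sub_lintegral_neg_part (integrable_of_bdd hf hC)
  rw [h3, h2, Measure.lintegral_bind κ.measurable.aemeasurable hfp.aemeasurable, Measure.lintegral_bind κ.measurable.aemeasurable hfn.aemeasurable]

/-- The key lemma: an invariant probability measure dominated by a multiple of `μ`
equals `μ`. -/
private lemma eq_of_dominated (μ ν : Measure X) [IsProbabilityMeasure μ]
    [IsProbabilityMeasure ν] (κ : Kernel X X) [IsMarkovKernel κ]
    (hsymm : ∀ f g : X → ℝ, Measurable f → Measurable g →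
      (∃ C, ∀ x, |f x| ≤ C) → (∃ C, ∀ x, |g x| ≤ C) →
      ∫ x, f x * ∫ y, g y ∂(κ x) ∂μ = ∫ x, (∫ y, f y ∂(κ x)) * g x ∂μ)
    (hharm : ∀ h : X → ℝ, Measurable h → (∃ C, ∀ x, |h x| ≤ C) →
      (∀ᵐ x ∂μ, ∫ y, h y ∂(κ x) = h x) → ∃ a : ℝ, ∀ᵐ x ∂μ, h x = a)
    (hinvν : ν.bind (fun x => κ x) = ν)
    (c : ℝ≥0∞) (hc0 : c ≠ 0) (hctop : c ≠ ∞) (hle : ν ≤ c • μ) : ν = μ := by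
  have hsmulfin : IsFiniteMeasure (c • μ) := by
    constructor
    rw [Measure.smul_apply, smul_eq_mul, measure_univ, mul_one]
    exact hctop.lt_top
  have hac : ν ≪ μ := by
    refine Measure.AbsolutelyContinuous.mk fun s hs h0 => ?_
    have := hle s
    rw [Measure.smul_apply, smul_eq_mul, h0, mul_zero] at this
    exact le_antisymm this zero_le
  -- a.e. bound on the Radon-Nikodym derivative
  have hbd : ∀ᵐ x ∂μ, ν.rnDeriv μ x ≤ c := by
    have h1 : ν.rnDeriv (c • μ) ≤ᵐ[c • μ] 1 := Measure.rnDeriv_le_one_of_le hle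
    have h1' : ∀ᵐ x ∂μ, ν.rnDeriv (c • μ) x ≤ 1 := (Measure.ae_ennreal_smul_measure_iff hc0).mp h1
    have h2 : ν.rnDeriv (c • μ) =ᵐ[μ] c⁻¹ • ν.rnDeriv μ :=
      Measure.rnDeriv_smul_right_of_ne_top ν μ hc0 hctop
    filter_upwards [h1', h2] with x hx1 hx2
    rw [hx2] at hx1
    simp only [Pi.smul_apply, smul_eq_mul] at hx1
    calc ν.rnDeriv μ x = c * (c⁻¹ * ν.rnDeriv μ x) := by
          rw [← mul_assoc, ENNReal.mul_inv_cancel hc0 hctop, one_mul]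
      _ ≤ c * 1 := mul_le_mul_right hx1 c
      _ = c := mul_one c
  set h : X → ℝ := fun x => min (ν.rnDeriv μ x).toReal c.toReal with hh
  have hhm : Measurable h := (Measure.measurable_rnDeriv ν μ).ennreal_toReal.min
    measurable_const
  have hh0 : ∀ x, 0 ≤ h x := fun x => le_min ENNReal.toReal_nonneg ENNReal.toReal_nonneg
  have hhb : ∀ x, |h x| ≤ c.toReal := fun x => by
    rw [abs_of_nonneg (hh0 x)]; exact min_le_right _ _
  have hae : h =ᵐ[μ] fun x => (ν.rnDeriv μ x).toReal := by
    filter_upwards [hbd] with x hx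
    exact min_eq_left (ENNReal.toReal_mono hctop hx)
  -- integration against h equals integration against ν
  have hint : ∀ f : X → ℝ, ∫ x, h x * f x ∂μ = ∫ x, f x ∂ν := by
    intro f
    rw [show ∫ x, h x * f x ∂μ = ∫ x, (ν.rnDeriv μ x).toReal • f x ∂μ from
      integral_congr_ae (by filter_upwards [hae] with x hx; rw [hx, smul_eq_mul])]
    exact MeasureTheory.integral_rnDeriv_smul hac
  -- the key identity: ∫ (Kh) g dμ = ∫ h g dμ for all bounded measurable g
  have key : ∀ g : X → ℝ, Measurable g → ∀ C : ℝ, (∀ x, |g x| ≤ C) →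
      ∫ x, (∫ y, h y ∂(κ x)) * g x ∂μ = ∫ x, h x * g x ∂μ := by
    intro g hg C hgC
    rw [← hsymm h g hhm hg ⟨c.toReal, hhb⟩ ⟨C, hgC⟩]
    rw [show (fun x => h x * ∫ y, g y ∂(κ x)) = fun x => h x * (fun x => ∫ y, g y ∂(κ x)) x
      from rfl]
    rw [hint (fun x => ∫ y, g y ∂(κ x)), hint g,
      ← integral_bind_bdd ν κ hg hgC, hinvν]
  -- conclude that h is harmonic
  set Kh : X → ℝ := fun x => ∫ y, h y ∂(κ x) with hKh
  have hKhm : Measurable Kh := kernel_int_meas κ hhm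
  have hKhb : ∀ x, |Kh x| ≤ c.toReal := fun x => kernel_int_bdd κ hhm hhb x
  have hgm : Measurable (fun x => Kh x - h x) := hKhm.sub hhm
  have hgb : ∀ x, |Kh x - h x| ≤ c.toReal + c.toReal := fun x =>
    (abs_sub (Kh x) (h x)).trans (add_le_add (hKhb x) (hhb x))
  have hzero : ∫ x, (Kh x - h x) * (Kh x - h x) ∂μ = 0 := by
    have e := key (fun x => Kh x - h x) hgm (c.toReal + c.toReal) hgb
    have h1 : Integrable (fun x => Kh x * (Kh x - h x)) μ := by
      refine integrable_of_bdd (hKhm.mul hgm) (C := c.toReal * (c.toReal + c.toReal))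
        fun x => ?_
      rw [abs_mul]
      exact mul_le_mul (hKhb x) (hgb x) (abs_nonneg _)
        (le_trans (abs_nonneg _) (hKhb x))
    have h2 : Integrable (fun x => h x * (Kh x - h x)) μ := by
      refine integrable_of_bdd (hhm.mul hgm) (C := c.toReal * (c.toReal + c.toReal))
        fun x => ?_
      rw [abs_mul]
      exact mul_le_mul (hhb x) (hgb x) (abs_nonneg _)
        (le_trans (abs_nonneg _) (hhb x))
    have : ∫ x, (Kh x - h x) * (Kh x - h x) ∂μ
        = ∫ x, Kh x * (Kh x - h x) ∂μ - ∫ x, h x * (Kh x - h x) ∂μ := by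
      rw [← integral_sub h1 h2]
      congr 1
      funext x
      ring
    rw [this, e, sub_self]
  have hsq : (fun x => (Kh x - h x) * (Kh x - h x)) =ᵐ[μ] 0 := by
    rw [← integral_eq_zero_iff_of_nonneg (fun x => mul_self_nonneg _)
      (integrable_of_bdd (hgm.mul hgm)
        (C := (c.toReal + c.toReal) * (c.toReal + c.toReal)) fun x => by
          rw [abs_mul]
          exact mul_le_mul (hgb x) (hgb x) (abs_nonneg _)
            (le_trans (abs_nonneg _) (hgb x)))]
    exact hzero
  have hharmh : ∀ᵐ x ∂μ, ∫ y, h y ∂(κ x) = h x := by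
    filter_upwards [hsq] with x hx
    have : (Kh x - h x) * (Kh x - h x) = 0 := hx
    have := mul_self_eq_zero.mp this
    have := sub_eq_zero.mp this
    exact this
  obtain ⟨a, ha⟩ := hharm h hhm ⟨c.toReal, hhb⟩ hharmh
  -- identify a = 1
  have hone : ∫ x, h x ∂μ = 1 := by
    have := hint (fun _ => (1 : ℝ))
    simpa using this
  have haval : a = 1 := by
    have : ∫ x, h x ∂μ = a := by
      rw [integral_congr_ae ha]
      simp
    rw [hone] at this
    exact this.symm
  have hone' : ∀ᵐ x ∂μ, h x = 1 := haval ▸ ha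
  -- conclude ν = μ
  ext s hs
  have h1 : (ν s).toReal = ∫ x in s, (ν.rnDeriv μ x).toReal ∂μ :=
    (Measure.setIntegral_toReal_rnDeriv hac s).symm
  have h2 : ∫ x in s, (ν.rnDeriv μ x).toReal ∂μ = ∫ x in s, (1 : ℝ) ∂μ := by
    refine setIntegral_congr_ae hs ?_
    filter_upwards [hae, hone'] with x hx hx1 _
    rw [← hx, hx1]
  have h3 : ∫ x in s, (1 : ℝ) ∂μ = (μ s).toReal := by
    simp [Measure.restrict_apply_univ, measureReal_def]
  have := h1.trans (h2.trans h3)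
  exact ENNReal.toReal_eq_toReal_iff' (measure_ne_top ν s) (measure_ne_top μ s) |>.mp this

end Aux

/-- Lemma 5.1 (abstract form): a `κ`-invariant, `κ`-symmetric probability measure `μ` all of
whose bounded harmonic functions are trivial is extremal in the set of `κ`-invariant
probability measures. -/
theorem extremal_of_trivial_harmonic
    {X : Type*} [MeasurableSpace X] (μ : Measure X) [IsProbabilityMeasure μ]
    (κ : Kernel X X) [IsMarkovKernel κ]
    (hinv : μ.bind (fun x => κ x) = μ)
    (hsymm : ∀ f g : X → ℝ, Measurable f → Measurable g →
      (∃ C, ∀ x, |f x| ≤ C) → (∃ C, ∀ x, |g x| ≤ C) →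
      ∫ x, f x * ∫ y, g y ∂(κ x) ∂μ = ∫ x, (∫ y, f y ∂(κ x)) * g x ∂μ)
    (hharm : ∀ h : X → ℝ, Measurable h → (∃ C, ∀ x, |h x| ≤ C) →
      (∀ᵐ x ∂μ, ∫ y, h y ∂(κ x) = h x) → ∃ a : ℝ, ∀ᵐ x ∂μ, h x = a)
    (μ₁ μ₂ : Measure X) [IsProbabilityMeasure μ₁] [IsProbabilityMeasure μ₂]
    (hinv₁ : μ₁.bind (fun x => κ x) = μ₁) (hinv₂ : μ₂.bind (fun x => κ x) = μ₂)
    (α₁ α₂ : ℝ≥0∞) (hα₁ : 0 < α₁) (hα₁' : α₁ < 1) (hα₂ : 0 < α₂) (hα₂' : α₂ < 1)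
    (hsum : α₁ + α₂ = 1) (hmix : μ = α₁ • μ₁ + α₂ • μ₂) :
    μ₁ = μ ∧ μ₂ = μ := by
  have hα₁top : α₁ ≠ ∞ := (hα₁'.trans ENNReal.one_lt_top).ne
  have hα₂top : α₂ ≠ ∞ := (hα₂'.trans ENNReal.one_lt_top).ne
  have hle₁ : μ₁ ≤ α₁⁻¹ • μ := by
    intro s
    rw [Measure.smul_apply, smul_eq_mul, hmix]
    simp only [Measure.coe_add, Pi.add_apply, Measure.smul_apply, smul_eq_mul]
    calc μ₁ s = α₁⁻¹ * (α₁ * μ₁ s) := by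
          rw [← mul_assoc, ENNReal.inv_mul_cancel hα₁.ne' hα₁top, one_mul]
      _ ≤ α₁⁻¹ * (α₁ * μ₁ s + α₂ * μ₂ s) := mul_le_mul_right le_self_add _
  have hle₂ : μ₂ ≤ α₂⁻¹ • μ := by
    intro s
    rw [Measure.smul_apply, smul_eq_mul, hmix]
    simp only [Measure.coe_add, Pi.add_apply, Measure.smul_apply, smul_eq_mul]
    calc μ₂ s = α₂⁻¹ * (α₂ * μ₂ s) := by
          rw [← mul_assoc, ENNReal.inv_mul_cancel hα₂.ne' hα₂top, one_mul]
      _ ≤ α₂⁻¹ * (α₁ * μ₁ s + α₂ * μ₂ s) := mul_le_mul_right le_add_self _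
  constructor
  · exact eq_of_dominated μ μ₁ κ hsymm hharm hinv₁ α₁⁻¹
      (ENNReal.inv_ne_zero.mpr hα₁top) (ENNReal.inv_ne_top.mpr hα₁.ne') hle₁
  · exact eq_of_dominated μ μ₂ κ hsymm hharm hinv₂ α₂⁻¹
      (ENNReal.inv_ne_zero.mpr hα₂top) (ENNReal.inv_ne_top.mpr hα₂.ne') hle₂
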